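/- (Langlands combinatorial lemma.) Let Δ be an obtuse basis of V and let A ⊆ C ⊆ Δ be subsets. Then for every H ∈ V, the sum ∑_{B : A ⊆ B ⊆ C} (−1)^{|B∖A|} τ_A^B(H) τ̂_B^C(H), taken over all subsets B of Δ with A ⊆ B ⊆ C, equals 1 if A = C and equals 0 if A ≠ C. -/

import Mathlib

open scoped RealInnerProductSpace Classical

variable {V : Type*} [NormedAddCommGroup V] [InnerProductSpace ℝ V] [FiniteDimensional ℝ V]
  [DecidableEq V]

/-- The orthogonal projection of `γ` onto the orthogonal complement of the span of `A`
(denoted `γ_A`). -/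
noncomputable def projPerp (A : Finset V) (γ : V) : V :=
  (Submodule.orthogonalProjection (Submodule.span ℝ (A : Set V))ᗮ γ : V)

/-- The characteristic function `τ_A^B` : equal to `1` if `⟪γ_A, H⟫ > 0` for every
`γ ∈ B \ A`, and `0` otherwise. -/
noncomputable def tauFn (A B : Finset V) (H : V) : ℝ :=
  if ∀ γ ∈ B \ A, 0 < ⟪projPerp A γ, H⟫ then 1 else 0

/-- The characteristic function `τ̂_A^B` (relative to a family `ϖ` of dual bases):
equal to `1` if `⟪ϖ A B γ, H⟫ > 0` for every `γ ∈ B \ A`, and `0` otherwise. -/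
noncomputable def tauHatFn (ϖ : Finset V → Finset V → V → V) (A B : Finset V) (H : V) : ℝ :=
  if ∀ γ ∈ B \ A, 0 < ⟪ϖ A B γ, H⟫ then 1 else 0

/-- `ϖ` is a family of dual bases: for all `A ⊆ B ⊆ Δ`, the family `(ϖ A B γ)_{γ ∈ B \ A}`
is the dual basis `Δ̂_A^B` of `Δ_A^B = (γ_A)_{γ ∈ B \ A}` in
`V_A^B = span B ⊓ (span A)ᗮ`. -/
def IsDualFamily (Δ : Finset V) (ϖ : Finset V → Finset V → V → V) : Prop :=
  ∀ A B : Finset V, A ⊆ B → B ⊆ Δ → ∀ γ ∈ B \ A,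
    (ϖ A B γ ∈ Submodule.span ℝ (B : Set V) ⊓ (Submodule.span ℝ (A : Set V))ᗮ) ∧
    ∀ δ ∈ B \ A, ⟪ϖ A B γ, projPerp A δ⟫ = if δ = γ then 1 else 0

set_option linter.unusedSectionVars false

lemma sub_projPerp_mem (A : Finset V) (γ : V) :
    γ - projPerp A γ ∈ Submodule.span ℝ (A : Set V) := by
  have h := Submodule.sub_starProjection_mem_orthogonal
    (K := (Submodule.span ℝ (A : Set V))ᗮ) γ
  rwa [Submodule.orthogonal_orthogonal] at h

lemma projPerp_mem_perp (A : Finset V) (γ : V) :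
    projPerp A γ ∈ (Submodule.span ℝ (A : Set V))ᗮ := SetLike.coe_mem _

lemma inner_projPerp_eq {A : Finset V} {w : V}
    (hw : w ∈ (Submodule.span ℝ (A : Set V))ᗮ) (δ : V) :
    ⟪w, projPerp A δ⟫ = ⟪w, δ⟫ := by
  have h0 : ⟪δ - projPerp A δ, w⟫ = 0 := hw _ (sub_projPerp_mem A δ)
  rw [inner_sub_left] at h0
  have h1 := real_inner_comm w (projPerp A δ)
  have h2 := real_inner_comm w δ
  linarith

lemma projPerp_eq_zero {A : Finset V} {δ : V}
    (hδ : δ ∈ Submodule.span ℝ (A : Set V)) : projPerp A δ = 0 := by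
  unfold projPerp
  rw [Submodule.orthogonalProjectionOnto_apply_of_mem_orthogonal, ZeroMemClass.coe_zero]
  rwa [Submodule.orthogonal_orthogonal]

lemma projPerp_self {A : Finset V} {w : V}
    (hw : w ∈ (Submodule.span ℝ (A : Set V))ᗮ) : projPerp A w = w :=
  Submodule.starProjection_eq_self_iff.mpr hw

noncomputable def projPerpL (A : Finset V) : V →ₗ[ℝ] V :=
  ((Submodule.span ℝ (A : Set V))ᗮ.subtype).comp
    (Submodule.orthogonalProjection (Submodule.span ℝ (A : Set V))ᗮ).toLinearMap

lemma projPerpL_apply (A : Finset V) (γ : V) : projPerpL A γ = projPerp A γ := rfl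

lemma mem_span_projPerp {A : Finset V} {s : Set V} {w : V}
    (hw1 : w ∈ Submodule.span ℝ s)
    (hw2 : w ∈ (Submodule.span ℝ (A : Set V))ᗮ) :
    w ∈ Submodule.span ℝ (projPerp A '' s) := by
  have hm : projPerpL A w ∈ Submodule.span ℝ (projPerpL A '' s) := by
    rw [← Submodule.map_span]
    exact Submodule.mem_map_of_mem hw1
  have he : (projPerpL A (V := V)) '' s = projPerp A '' s := by
    ext z; simp [projPerpL_apply]
  rw [he, projPerpL_apply, projPerp_self hw2] at hm
  exact hm

lemma inner_span_eq_zero {s : Set V} {w : V} (h : ∀ g ∈ s, ⟪g, w⟫ = 0) :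
    ∀ x ∈ Submodule.span ℝ s, ⟪x, w⟫ = 0 := by
  intro x hx
  induction hx using Submodule.span_induction with
  | mem g hg => exact h g hg
  | zero => simp
  | add a b _ _ ha hb => rw [inner_add_left, ha, hb]; ring
  | smul c a _ ha => rw [real_inner_smul_left, ha]; ring

lemma mem_sdiff_mono {A B C : Finset V} (hAB : A ⊆ B) {γ : V} (hγ : γ ∈ C \ B) :
    γ ∈ C \ A := by
  rcases Finset.mem_sdiff.1 hγ with ⟨h1, h2⟩
  exact Finset.mem_sdiff.2 ⟨h1, fun h => h2 (hAB h)⟩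

lemma dual_perp_spanB {Δ : Finset V} {ϖ : Finset V → Finset V → V → V}
    (hϖ : IsDualFamily Δ ϖ) {A B C : Finset V}
    (hAB : A ⊆ B) (hBC : B ⊆ C) (hCΔ : C ⊆ Δ) {γ : V} (hγ : γ ∈ C \ B) :
    ϖ A C γ ∈ (Submodule.span ℝ (B : Set V))ᗮ := by
  have hAC : A ⊆ C := hAB.trans hBC
  have hγ' : γ ∈ C \ A := mem_sdiff_mono hAB hγ
  obtain ⟨hmem, hdual⟩ := hϖ A C hAC hCΔ γ hγ'
  have hperpA : ϖ A C γ ∈ (Submodule.span ℝ (A : Set V))ᗮ := hmem.2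
  rw [Submodule.mem_orthogonal]
  intro u hu
  refine inner_span_eq_zero ?_ u hu
  intro b hb
  rw [Finset.mem_coe] at hb
  by_cases hbA : b ∈ A
  · exact (Submodule.mem_orthogonal _ _).1 hperpA b
      (Submodule.subset_span (Finset.mem_coe.2 hbA))
  · have hbCA : b ∈ C \ A := Finset.mem_sdiff.2 ⟨hBC hb, hbA⟩
    have hbγ : b ≠ γ := fun h => (Finset.mem_sdiff.1 hγ).2 (h ▸ hb)
    have h1 : ⟪ϖ A C γ, projPerp A b⟫ = 0 := by
      rw [hdual b hbCA, if_neg hbγ]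
    rw [inner_projPerp_eq hperpA] at h1
    rw [real_inner_comm]; exact h1

lemma dual_indep {Δ : Finset V} {ϖ : Finset V → Finset V → V → V}
    (hϖ : IsDualFamily Δ ϖ) {A B C : Finset V}
    (hAB : A ⊆ B) (hBC : B ⊆ C) (hCΔ : C ⊆ Δ) {γ : V} (hγ : γ ∈ C \ B) :
    ϖ B C γ = ϖ A C γ := by
  have hAC : A ⊆ C := hAB.trans hBC
  have hγ' : γ ∈ C \ A := mem_sdiff_mono hAB hγ
  obtain ⟨hm1, hd1⟩ := hϖ B C hBC hCΔ γ hγ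
  obtain ⟨hm2, hd2⟩ := hϖ A C hAC hCΔ γ hγ'
  have hperpA : ϖ A C γ ∈ (Submodule.span ℝ (A : Set V))ᗮ := hm2.2
  have hperpB2 : ϖ A C γ ∈ (Submodule.span ℝ (B : Set V))ᗮ :=
    dual_perp_spanB hϖ hAB hBC hCΔ hγ
  set d := ϖ B C γ - ϖ A C γ with hd
  have hdspan : d ∈ Submodule.span ℝ (C : Set V) := sub_mem hm1.1 hm2.1
  have hdperp : d ∈ (Submodule.span ℝ (B : Set V))ᗮ := sub_mem hm1.2 hperpB2
  have hdS : d ∈ Submodule.span ℝ (projPerp B '' (C : Set V)) :=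
    mem_span_projPerp hdspan hdperp
  have hz : ∀ g ∈ projPerp B '' (C : Set V), ⟪g, d⟫ = 0 := by
    rintro g ⟨δ, hδ, rfl⟩
    have hδC : δ ∈ C := Finset.mem_coe.1 hδ
    by_cases hδB : δ ∈ B
    · rw [projPerp_eq_zero (Submodule.subset_span (Finset.mem_coe.2 hδB))]
      simp
    · have hδCB : δ ∈ C \ B := Finset.mem_sdiff.2 ⟨hδC, hδB⟩
      have hδCA : δ ∈ C \ A := mem_sdiff_mono hAB hδCB
      have e1 : ⟪ϖ B C γ, projPerp B δ⟫ = if δ = γ then 1 else 0 := hd1 δ hδCB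
      have e2 : ⟪ϖ A C γ, projPerp B δ⟫ = if δ = γ then 1 else 0 := by
        rw [inner_projPerp_eq hperpB2, ← inner_projPerp_eq hperpA]
        exact hd2 δ hδCA
      rw [real_inner_comm, hd, inner_sub_left, e1, e2, sub_self]
  have : ⟪d, d⟫ = 0 := inner_span_eq_zero hz d hdS
  have : d = 0 := by rwa [inner_self_eq_zero] at this
  exact sub_eq_zero.1 this

lemma kron_sum_left {A C : Finset V} {ϖ : Finset V → Finset V → V → V}
    (hdual : ∀ γ ∈ C \ A, ∀ δ ∈ C \ A,
      ⟪ϖ A C γ, projPerp A δ⟫ = if δ = γ then 1 else 0)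
    (c : V → ℝ) {δ : V} (hδ : δ ∈ C \ A) :
    ⟪projPerp A δ, ∑ γ ∈ C \ A, c γ • ϖ A C γ⟫ = c δ := by
  rw [inner_sum]
  have h : ∀ γ ∈ C \ A, ⟪projPerp A δ, c γ • ϖ A C γ⟫ = if γ = δ then c γ else 0 := by
    intro γ hγ
    rw [real_inner_smul_right, real_inner_comm, hdual γ hγ δ hδ]
    by_cases h : δ = γ
    · subst h; simp
    · rw [if_neg h, if_neg (fun hh => h hh.symm), mul_zero]
  rw [Finset.sum_congr rfl h, Finset.sum_ite_eq' (C \ A) δ c, if_pos hδ]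

lemma kron_sum_right {A C : Finset V} {ϖ : Finset V → Finset V → V → V}
    (hdual : ∀ γ ∈ C \ A, ∀ δ ∈ C \ A,
      ⟪ϖ A C γ, projPerp A δ⟫ = if δ = γ then 1 else 0)
    (c : V → ℝ) {δ : V} (hδ : δ ∈ C \ A) :
    ⟪ϖ A C δ, ∑ γ ∈ C \ A, c γ • projPerp A γ⟫ = c δ := by
  rw [inner_sum]
  have h : ∀ γ ∈ C \ A, ⟪ϖ A C δ, c γ • projPerp A γ⟫ = if γ = δ then c γ else 0 := by
    intro γ hγ
    rw [real_inner_smul_right, hdual δ hδ γ hγ]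
    by_cases h : γ = δ
    · subst h; simp
    · rw [if_neg h, if_neg h, mul_zero]
  rw [Finset.sum_congr rfl h, Finset.sum_ite_eq' (C \ A) δ c, if_pos hδ]

lemma key_geometric {A C : Finset V} (hAC : A ⊆ C) (hne : A ≠ C)
    {ϖ : Finset V → Finset V → V → V}
    (hmem : ∀ γ ∈ C \ A, ϖ A C γ ∈
      Submodule.span ℝ (C : Set V) ⊓ (Submodule.span ℝ (A : Set V))ᗮ)
    (hdual : ∀ γ ∈ C \ A, ∀ δ ∈ C \ A,
      ⟪ϖ A C γ, projPerp A δ⟫ = if δ = γ then 1 else 0)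
    (H : V)
    (hcov : ∀ γ ∈ C \ A, 0 < ⟪projPerp A γ, H⟫ ∨ 0 < ⟪ϖ A C γ, H⟫)
    (hxy : ∀ γ ∈ C \ A, ⟪projPerp A γ, H⟫ * ⟪ϖ A C γ, H⟫ ≤ 0) : False := by
  set x : V → ℝ := fun γ => ⟪projPerp A γ, H⟫ with hxdef
  set y : V → ℝ := fun γ => ⟪ϖ A C γ, H⟫ with hydef
  set u : V := ∑ γ ∈ C \ A, x γ • ϖ A C γ with hu
  set v : V := ∑ γ ∈ C \ A, y γ • projPerp A γ with hv
  set S : Set V := projPerp A '' (C : Set V) with hS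
  set T : Set V := ϖ A C '' ((C \ A : Finset V) : Set V) with hT
  -- memberships
  have hϖS : ∀ γ ∈ C \ A, ϖ A C γ ∈ Submodule.span ℝ S := fun γ hγ =>
    mem_span_projPerp (hmem γ hγ).1 (hmem γ hγ).2
  have hpS : ∀ γ ∈ C, projPerp A γ ∈ Submodule.span ℝ S :=
    fun γ hγ => Submodule.subset_span ⟨γ, Finset.mem_coe.2 hγ, rfl⟩
  have huS : u ∈ Submodule.span ℝ S :=
    Submodule.sum_mem _ (fun γ hγ => Submodule.smul_mem _ _ (hϖS γ hγ))
  have huT : u ∈ Submodule.span ℝ T :=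
    Submodule.sum_mem _ (fun γ hγ => Submodule.smul_mem _ _
      (Submodule.subset_span ⟨γ, Finset.mem_coe.2 hγ, rfl⟩))
  have hvS : v ∈ Submodule.span ℝ S :=
    Submodule.sum_mem _ (fun γ hγ => Submodule.smul_mem _ _
      (hpS γ (Finset.mem_sdiff.1 hγ).1))
  -- S-generator orthogonality for u - H
  have hSgen : ∀ g ∈ S, ⟪g, u - H⟫ = 0 := by
    rintro g ⟨δ, hδ, rfl⟩
    by_cases hδA : δ ∈ A
    · rw [projPerp_eq_zero (Submodule.subset_span (Finset.mem_coe.2 hδA))]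
      simp
    · have hδCA : δ ∈ C \ A := Finset.mem_sdiff.2 ⟨Finset.mem_coe.1 hδ, hδA⟩
      rw [inner_sub_right, kron_sum_left hdual x hδCA, sub_self]
  have hSu := inner_span_eq_zero hSgen
  -- T-generator orthogonality for v - H
  have hTgen : ∀ g ∈ T, ⟪g, v - H⟫ = 0 := by
    rintro g ⟨δ, hδ, rfl⟩
    have hδCA : δ ∈ C \ A := Finset.mem_coe.1 hδ
    rw [inner_sub_right, kron_sum_right hdual y hδCA, sub_self]
  have hTv := inner_span_eq_zero hTgen
  -- v ∈ span T
  have hvT : v ∈ Submodule.span ℝ T := by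
    set v' : V := ∑ γ ∈ C \ A, ⟪projPerp A γ, v⟫ • ϖ A C γ with hv'
    have hv'T : v' ∈ Submodule.span ℝ T :=
      Submodule.sum_mem _ (fun γ hγ => Submodule.smul_mem _ _
        (Submodule.subset_span ⟨γ, Finset.mem_coe.2 hγ, rfl⟩))
    have hv'S : v' ∈ Submodule.span ℝ S :=
      Submodule.sum_mem _ (fun γ hγ => Submodule.smul_mem _ _ (hϖS γ hγ))
    have hgen : ∀ g ∈ S, ⟪g, v - v'⟫ = 0 := by
      rintro g ⟨δ, hδ, rfl⟩
      by_cases hδA : δ ∈ A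
      · rw [projPerp_eq_zero (Submodule.subset_span (Finset.mem_coe.2 hδA))]
        simp
      · have hδCA : δ ∈ C \ A := Finset.mem_sdiff.2 ⟨Finset.mem_coe.1 hδ, hδA⟩
        rw [inner_sub_right, kron_sum_left hdual (fun γ => ⟪projPerp A γ, v⟫) hδCA,
          sub_self]
    have h0 : ⟪v - v', v - v'⟫ = 0 :=
      inner_span_eq_zero hgen _ (sub_mem hvS hv'S)
    have : v - v' = 0 := by rwa [inner_self_eq_zero] at h0
    rw [sub_eq_zero] at this
    rw [this]; exact hv'T
  -- u = v
  have huv : u = v := by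
    have h1 : ⟪u - v, u - H⟫ = 0 := hSu _ (sub_mem huS hvS)
    have h2 : ⟪u - v, v - H⟫ = 0 := hTv _ (sub_mem huT hvT)
    have h3 : ⟪u - v, u - v⟫ = 0 := by
      have : u - v = (u - H) - (v - H) := by abel
      calc ⟪u - v, u - v⟫ = ⟪u - v, (u - H) - (v - H)⟫ := by rw [← this]
        _ = ⟪u - v, u - H⟫ - ⟪u - v, v - H⟫ := inner_sub_right _ _ _
        _ = 0 := by rw [h1, h2, sub_self]
    have := inner_self_eq_zero.1 h3
    rwa [sub_eq_zero] at this
  -- norm of u is nonpositive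
  have hnorm : ⟪u, u⟫ ≤ 0 := by
    nth_rewrite 2 [huv]
    rw [hv, inner_sum]
    apply Finset.sum_nonpos
    intro γ hγ
    rw [real_inner_smul_right, real_inner_comm, kron_sum_left hdual x hγ]
    have := hxy γ hγ
    nlinarith [this]
  have hu0 : u = 0 := by rwa [real_inner_self_nonpos] at hnorm
  have hv0 : v = 0 := huv ▸ hu0
  have hx0 : ∀ γ ∈ C \ A, x γ = 0 := by
    intro γ hγ
    have := kron_sum_left hdual x hγ
    rw [← hu, hu0, inner_zero_right] at this
    exact this.symm
  have hy0 : ∀ γ ∈ C \ A, y γ = 0 := by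
    intro γ hγ
    have := kron_sum_right hdual y hγ
    rw [← hv, hv0, inner_zero_right] at this
    exact this.symm
  have hnonempty : (C \ A).Nonempty :=
    Finset.sdiff_nonempty.2 (fun h => hne (Finset.Subset.antisymm hAC h))
  obtain ⟨γ, hγ⟩ := hnonempty
  rcases hcov γ hγ with h | h
  · rw [show ⟪projPerp A γ, H⟫ = x γ from rfl, hx0 γ hγ] at h; exact lt_irrefl _ h
  · rw [show ⟪ϖ A C γ, H⟫ = y γ from rfl, hy0 γ hγ] at h; exact lt_irrefl _ h

lemma sum_neg_one_pow_powerset {α : Type*} [DecidableEq α] (s : Finset α) :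
    ∑ T ∈ s.powerset, (-1 : ℝ) ^ T.card = if s = ∅ then 1 else 0 := by
  have h := Finset.sum_powerset_neg_one_pow_card (x := s)
  calc ∑ T ∈ s.powerset, (-1 : ℝ) ^ T.card
      = ((∑ T ∈ s.powerset, (-1 : ℤ) ^ T.card : ℤ) : ℝ) := by push_cast; rfl
    _ = ((if s = ∅ then 1 else 0 : ℤ) : ℝ) := by rw [h]
    _ = if s = ∅ then 1 else 0 := by split <;> simp

lemma sum_neg_one_pow_Icc {α : Type*} [DecidableEq α] (L P : Finset α) :
    ∑ S ∈ Finset.Icc L P, (-1 : ℝ) ^ S.card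
      = if L = P then (-1 : ℝ) ^ L.card else 0 := by
  by_cases hLP : L ⊆ P
  · have himg : Finset.Icc L P = (P \ L).powerset.image (fun T => L ∪ T) := by
      ext S
      simp only [Finset.mem_Icc, Finset.mem_image, Finset.mem_powerset,
        Finset.le_eq_subset]
      constructor
      · rintro ⟨h1, h2⟩
        exact ⟨S \ L, Finset.sdiff_subset_sdiff h2 (Finset.Subset.refl L),
          Finset.union_sdiff_of_subset h1⟩
      · rintro ⟨T, hT, rfl⟩
        exact ⟨Finset.subset_union_left,
          Finset.union_subset hLP (hT.trans (Finset.sdiff_subset))⟩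
    have hinj : ∀ T₁ ∈ (P \ L).powerset, ∀ T₂ ∈ (P \ L).powerset,
        L ∪ T₁ = L ∪ T₂ → T₁ = T₂ := by
      intro T₁ h₁ T₂ h₂ h
      rw [Finset.mem_powerset] at h₁ h₂
      have d₁ : Disjoint L T₁ := Finset.disjoint_left.2
        (fun {a} ha haT => (Finset.mem_sdiff.1 (h₁ haT)).2 ha)
      have d₂ : Disjoint L T₂ := Finset.disjoint_left.2
        (fun {a} ha haT => (Finset.mem_sdiff.1 (h₂ haT)).2 ha)
      have := congrArg (fun X => X \ L) h
      simpa [Finset.union_sdiff_cancel_left d₁, Finset.union_sdiff_cancel_left d₂]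
        using this
    rw [himg, Finset.sum_image hinj]
    have hcard : ∀ T ∈ (P \ L).powerset, (-1 : ℝ) ^ (L ∪ T).card
        = (-1 : ℝ) ^ L.card * (-1 : ℝ) ^ T.card := by
      intro T hT
      rw [Finset.mem_powerset] at hT
      have d : Disjoint L T := Finset.disjoint_left.2
        (fun {a} ha haT => (Finset.mem_sdiff.1 (hT haT)).2 ha)
      rw [Finset.card_union_of_disjoint d, pow_add]
    rw [Finset.sum_congr rfl hcard, ← Finset.mul_sum, sum_neg_one_pow_powerset]
    by_cases he : P \ L = ∅
    · have : L = P := Finset.Subset.antisymm hLP (fun a ha => by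
        by_contra haL
        exact absurd (Finset.mem_sdiff.2 ⟨ha, haL⟩) (by simp [he]))
      rw [if_pos he, if_pos this, mul_one]
    · have : L ≠ P := fun h => he (by rw [h, Finset.sdiff_self])
      rw [if_neg he, if_neg this, mul_zero]
  · rw [Finset.Icc_eq_empty (fun h => hLP h), Finset.sum_empty,
      if_neg (fun h => hLP h.le)]

theorem stmt_6_aux
    (Δ : Finset V)
    (ϖ : Finset V → Finset V → V → V) (hϖ : IsDualFamily Δ ϖ)
    (A C : Finset V) (hAC : A ⊆ C) (hCΔ : C ⊆ Δ)
    (H : V) :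
    ∑ B ∈ Finset.Icc A C, (-1 : ℝ) ^ (B \ A).card * (tauFn A B H * tauHatFn ϖ B C H) =
      if A = C then 1 else 0 := by
  classical
  set n := C \ A with hn
  set P := n.filter (fun γ => 0 < ⟪projPerp A γ, H⟫) with hPdef
  set Q := n.filter (fun γ => 0 < ⟪ϖ A C γ, H⟫) with hQdef
  set L := n \ Q with hLdef
  have hPn : P ⊆ n := Finset.filter_subset _ _
  have hLn : L ⊆ n := Finset.sdiff_subset
  -- rewrite each term
  have hterm : ∀ B ∈ Finset.Icc A C,
      (-1 : ℝ) ^ (B \ A).card * (tauFn A B H * tauHatFn ϖ B C H) =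
      if L ⊆ B \ A ∧ B \ A ⊆ P then (-1 : ℝ) ^ (B \ A).card else 0 := by
    intro B hB
    rw [Finset.mem_Icc] at hB
    obtain ⟨hAB, hBC⟩ := hB
    have hBAn : B \ A ⊆ n := Finset.sdiff_subset_sdiff hBC (Finset.Subset.refl A)
    have hτ : tauFn A B H = if B \ A ⊆ P then 1 else 0 := by
      unfold tauFn
      refine if_congr ?_ rfl rfl
      constructor
      · intro h γ hγ
        exact Finset.mem_filter.2 ⟨hBAn hγ, h γ hγ⟩
      · intro h γ hγ
        exact (Finset.mem_filter.1 (h hγ)).2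
    have hτ' : tauHatFn ϖ B C H = if L ⊆ B \ A then 1 else 0 := by
      unfold tauHatFn
      refine if_congr ?_ rfl rfl
      have hrw : ∀ γ ∈ C \ B, ϖ B C γ = ϖ A C γ :=
        fun γ hγ => dual_indep hϖ hAB hBC hCΔ hγ
      constructor
      · intro h γ hγ
        rw [hLdef, Finset.mem_sdiff] at hγ
        obtain ⟨hγn, hγQ⟩ := hγ
        rw [hn, Finset.mem_sdiff] at hγn
        by_contra hγBA
        have hγB : γ ∉ B := by
          intro hh
          exact hγBA (Finset.mem_sdiff.2 ⟨hh, hγn.2⟩)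
        have hγCB : γ ∈ C \ B := Finset.mem_sdiff.2 ⟨hγn.1, hγB⟩
        have := h γ hγCB
        rw [hrw γ hγCB] at this
        exact hγQ (Finset.mem_filter.2 ⟨Finset.mem_sdiff.2 hγn, this⟩)
      · intro h γ hγ
        have hγn : γ ∈ n := mem_sdiff_mono hAB hγ
        have hγQ : γ ∈ Q := by
          by_contra hq
          have hγL : γ ∈ L := Finset.mem_sdiff.2 ⟨hγn, hq⟩
          have := h hγL
          exact (Finset.mem_sdiff.1 hγ).2 (Finset.mem_sdiff.1 this).1
        rw [hrw γ hγ]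
        exact (Finset.mem_filter.1 hγQ).2
    rw [hτ, hτ']
    by_cases h1 : B \ A ⊆ P <;> by_cases h2 : L ⊆ B \ A <;>
      simp [h1, h2]
  rw [Finset.sum_congr rfl hterm]
  -- reindex over powerset of n
  have himg : Finset.Icc A C = n.powerset.image (fun S => A ∪ S) := by
    ext B
    simp only [Finset.mem_Icc, Finset.mem_image, Finset.mem_powerset,
      Finset.le_eq_subset]
    constructor
    · rintro ⟨h1, h2⟩
      exact ⟨B \ A, Finset.sdiff_subset_sdiff h2 (Finset.Subset.refl A),
        Finset.union_sdiff_of_subset h1⟩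
    · rintro ⟨S, hS, rfl⟩
      exact ⟨Finset.subset_union_left,
        Finset.union_subset hAC (hS.trans (Finset.sdiff_subset))⟩
  have hdisj : ∀ S ∈ n.powerset, Disjoint A S := by
    intro S hS
    rw [Finset.mem_powerset] at hS
    exact Finset.disjoint_left.2 (fun {a} ha haS => (Finset.mem_sdiff.1 (hS haS)).2 ha)
  have hinj : ∀ S₁ ∈ n.powerset, ∀ S₂ ∈ n.powerset,
      A ∪ S₁ = A ∪ S₂ → S₁ = S₂ := by
    intro S₁ h₁ S₂ h₂ h
    have := congrArg (fun X => X \ A) h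
    simpa [Finset.union_sdiff_cancel_left (hdisj S₁ h₁),
      Finset.union_sdiff_cancel_left (hdisj S₂ h₂)] using this
  rw [himg, Finset.sum_image hinj]
  have hAS : ∀ S ∈ n.powerset,
      (if L ⊆ (A ∪ S) \ A ∧ (A ∪ S) \ A ⊆ P then (-1 : ℝ) ^ ((A ∪ S) \ A).card else 0)
      = if L ⊆ S ∧ S ⊆ P then (-1 : ℝ) ^ S.card else 0 := by
    intro S hS
    rw [Finset.union_sdiff_cancel_left (hdisj S hS)]
  rw [Finset.sum_congr rfl hAS]
  -- restrict to Icc L P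
  have hIcc : ∑ S ∈ n.powerset, (if L ⊆ S ∧ S ⊆ P then (-1 : ℝ) ^ S.card else 0)
      = ∑ S ∈ Finset.Icc L P, (-1 : ℝ) ^ S.card := by
    rw [← Finset.sum_filter]
    congr 1
    ext S
    simp only [Finset.mem_filter, Finset.mem_powerset, Finset.mem_Icc,
      Finset.le_eq_subset]
    constructor
    · rintro ⟨_, h2, h3⟩; exact ⟨h2, h3⟩
    · rintro ⟨h2, h3⟩; exact ⟨h3.trans hPn, h2, h3⟩
  rw [hIcc, sum_neg_one_pow_Icc]
  -- final case analysis
  by_cases h : A = C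
  · have hnE : n = ∅ := by rw [hn, h, Finset.sdiff_self]
    have hPE : P = ∅ := Finset.subset_empty.1 (hnE ▸ hPn)
    have hLE : L = ∅ := Finset.subset_empty.1 (hnE ▸ hLn)
    rw [if_pos h, if_pos (hLE.trans hPE.symm), hLE, Finset.card_empty, pow_zero]
  · rw [if_neg h]
    have hLP : L ≠ P := by
      intro hLP
      obtain ⟨hmem, hdual⟩ : (∀ γ ∈ C \ A, ϖ A C γ ∈
          Submodule.span ℝ (C : Set V) ⊓ (Submodule.span ℝ (A : Set V))ᗮ) ∧
          (∀ γ ∈ C \ A, ∀ δ ∈ C \ A,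
            ⟪ϖ A C γ, projPerp A δ⟫ = if δ = γ then 1 else 0) := by
        constructor
        · intro γ hγ; exact (hϖ A C hAC hCΔ γ hγ).1
        · intro γ hγ; exact (hϖ A C hAC hCΔ γ hγ).2
      refine key_geometric hAC h hmem hdual H ?_ ?_
      · intro γ hγ
        by_cases hq : γ ∈ Q
        · exact Or.inr (Finset.mem_filter.1 hq).2
        · have : γ ∈ L := Finset.mem_sdiff.2 ⟨hγ, hq⟩
          rw [hLP] at this
          exact Or.inl (Finset.mem_filter.1 this).2
      · intro γ hγ
        by_cases hp : γ ∈ P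
        · have hx : 0 < ⟪projPerp A γ, H⟫ := (Finset.mem_filter.1 hp).2
          have hq : γ ∉ Q := (Finset.mem_sdiff.1 (hLP ▸ hp)).2
          have hy : ⟪ϖ A C γ, H⟫ ≤ 0 := by
            by_contra hy
            exact hq (Finset.mem_filter.2 ⟨hγ, lt_of_not_ge hy⟩)
          exact mul_nonpos_of_nonneg_of_nonpos hx.le hy
        · have hx : ⟪projPerp A γ, H⟫ ≤ 0 := by
            by_contra hx
            exact hp (Finset.mem_filter.2 ⟨hγ, lt_of_not_ge hx⟩)
          have hq : γ ∈ Q := by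
            by_contra hq
            exact hp (hLP ▸ Finset.mem_sdiff.2 ⟨hγ, hq⟩)
          exact mul_nonpos_of_nonpos_of_nonneg hx (Finset.mem_filter.1 hq).2.le
    rw [if_neg hLP]

/-- **Langlands combinatorial lemma.** For `A ⊆ C ⊆ Δ` and every `H`,
`∑_{B : A ⊆ B ⊆ C} (−1)^{|B∖A|} τ_A^B(H) τ̂_B^C(H) = 1` if `A = C` and `= 0` otherwise. -/
theorem stmt_6
    (Δ : Finset V)
    (hli : LinearIndependent ℝ ((↑) : ↥(Δ : Set V) → V))
    (hspan : Submodule.span ℝ (Δ : Set V) = ⊤)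
    (hobtuse : ∀ α ∈ Δ, ∀ β ∈ Δ, α ≠ β → ⟪α, β⟫ ≤ 0)
    (ϖ : Finset V → Finset V → V → V) (hϖ : IsDualFamily Δ ϖ)
    (A C : Finset V) (hAC : A ⊆ C) (hCΔ : C ⊆ Δ)
    (H : V) :
    ∑ B ∈ Finset.Icc A C, (-1 : ℝ) ^ (B \ A).card * (tauFn A B H * tauHatFn ϖ B C H) =
      if A = C then 1 else 0 := by
  exact stmt_6_aux Δ ϖ hϖ A C hAC hCΔ H
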